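/- (Inclusion Theorem for absolutely summing operators.) Let X and Y be Banach spaces, let p₁, p₂, q₁, q₂ satisfy condition (★), and let u : X → Y be a continuous linear operator. If u is absolutely (q₁,p₁)-summing, then u is absolutely (q₂,p₂)-summing; moreover, if C > 0 satisfies (Σ_{j=1}^m ‖u(x_j)‖^{q₁})^{1/q₁} ≤ C · sup_{φ∈B_{X*}} (Σ_{j=1}^m |φ(x_j)|^{p₁})^{1/p₁} for every m ∈ ℕ and all x₁, …, x_m ∈ X, then (Σ_{j=1}^m ‖u(x_j)‖^{q₂})^{1/q₂} ≤ C · sup_{φ∈B_{X*}} (Σ_{j=1}^m |φ(x_j)|^{p₂})^{1/p₂} for every m ∈ ℕ and all x₁, …, x_m ∈ X. -/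

import Mathlib

open scoped BigOperators

/-- A continuous linear operator `u : X → Y` is absolutely `(q,p)`-summing if there is
`C > 0` with `(∑ⱼ ‖u xⱼ‖^q)^{1/q} ≤ C sup_{φ∈B_{X*}} (∑ⱼ |φ(xⱼ)|^p)^{1/p}` for all finite
families. -/
def AbsSumming {𝕜 : Type*} [RCLike 𝕜] {X Y : Type*}
    [NormedAddCommGroup X] [NormedSpace 𝕜 X]
    [NormedAddCommGroup Y] [NormedSpace 𝕜 Y]
    (q p : ℝ) (u : X →L[𝕜] Y) : Prop :=
  ∃ C : ℝ, 0 < C ∧ ∀ (m : ℕ) (x : Fin m → X),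
    (∑ j, ‖u (x j)‖ ^ q) ^ (1 / q) ≤
      C * ⨆ φ : {φ : X →L[𝕜] 𝕜 // ‖φ‖ ≤ 1}, (∑ j, ‖φ.1 (x j)‖ ^ p) ^ (1 / p)


lemma lp_mono {m : ℕ} (b : Fin m → ℝ) (hb : ∀ j, 0 ≤ b j) {q q' : ℝ}
    (hq : 0 < q) (hqq' : q ≤ q') :
    (∑ j, b j ^ q') ^ (1 / q') ≤ (∑ j, b j ^ q) ^ (1 / q) := by
  have hq' : 0 < q' := lt_of_lt_of_le hq hqq'
  set T : ℝ := (∑ j, b j ^ q) ^ (1 / q) with hT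
  have hsumq : 0 ≤ ∑ j, b j ^ q := Finset.sum_nonneg fun j _ => Real.rpow_nonneg (hb j) q
  have hT0 : 0 ≤ T := Real.rpow_nonneg hsumq _
  have hTq : T ^ q = ∑ j, b j ^ q := by
    rw [hT, ← Real.rpow_mul hsumq, one_div_mul_cancel hq.ne', Real.rpow_one]
  have hbT : ∀ j, b j ≤ T := fun j => by
    have h1 : b j ^ q ≤ ∑ i, b i ^ q :=
      Finset.single_le_sum (fun i _ => Real.rpow_nonneg (hb i) q) (Finset.mem_univ j)
    calc b j = (b j ^ q) ^ (1 / q) := by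
          rw [← Real.rpow_mul (hb j), mul_one_div_cancel hq.ne', Real.rpow_one]
      _ ≤ T := Real.rpow_le_rpow (Real.rpow_nonneg (hb j) q) h1 (by positivity)
  have key : ∑ j, b j ^ q' ≤ T ^ q' := by
    have : T ^ q' = T ^ (q' - q) * T ^ q := by
      rw [← Real.rpow_add' hT0 (by simpa using hq'.ne')]
      congr 1; ring
    rw [this, hTq, Finset.mul_sum]
    refine Finset.sum_le_sum fun j _ => ?_
    calc b j ^ q' = b j ^ (q' - q) * b j ^ q := by
          rw [← Real.rpow_add' (hb j) (by simpa using hq'.ne')]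
          congr 1; ring
      _ ≤ T ^ (q' - q) * b j ^ q := by
          exact mul_le_mul_of_nonneg_right
            (Real.rpow_le_rpow (hb j) (hbT j) (by linarith)) (Real.rpow_nonneg (hb j) q)
  calc (∑ j, b j ^ q') ^ (1 / q')
      ≤ (T ^ q') ^ (1 / q') :=
        Real.rpow_le_rpow (Finset.sum_nonneg fun j _ => Real.rpow_nonneg (hb j) q') key
          (by positivity)
    _ = T := by rw [← Real.rpow_mul hT0, mul_one_div_cancel hq'.ne', Real.rpow_one]

lemma gen_holder {m : ℕ} (a b : Fin m → ℝ) (ha : ∀ j, 0 ≤ a j) (hb : ∀ j, 0 ≤ b j)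
    {α β : ℝ} (hα : 1 ≤ α) (hβ : 1 ≤ β) (hab : 1 ≤ 1 / α + 1 / β) :
    ∑ j, a j * b j ≤ (∑ j, a j ^ α) ^ (1 / α) * (∑ j, b j ^ β) ^ (1 / β) := by
  have hβ0 : 0 < β := lt_of_lt_of_le one_pos hβ
  have hBnn : 0 ≤ (∑ j, b j ^ β) ^ (1 / β) :=
    Real.rpow_nonneg (Finset.sum_nonneg fun j _ => Real.rpow_nonneg (hb j) β) _
  have hbB : ∀ j, b j ≤ (∑ j, b j ^ β) ^ (1 / β) := fun j => by
    have h1 : b j ^ β ≤ ∑ i, b i ^ β :=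
      Finset.single_le_sum (fun i _ => Real.rpow_nonneg (hb i) β) (Finset.mem_univ j)
    calc b j = (b j ^ β) ^ (1 / β) := by
          rw [← Real.rpow_mul (hb j), mul_one_div_cancel hβ0.ne', Real.rpow_one]
      _ ≤ _ := Real.rpow_le_rpow (Real.rpow_nonneg (hb j) β) h1 (by positivity)
  rcases eq_or_lt_of_le hα with h1 | h1
  · rw [← h1]
    simp only [Real.rpow_one, div_one, one_div_one]
    calc ∑ j, a j * b j ≤ ∑ j, a j * (∑ i, b i ^ β) ^ (1 / β) :=
          Finset.sum_le_sum fun j _ => mul_le_mul_of_nonneg_left (hbB j) (ha j)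
      _ = (∑ j, a j) * (∑ i, b i ^ β) ^ (1 / β) := by rw [← Finset.sum_mul]
  · have hα0 : 0 < α := lt_trans one_pos h1
    have hconj : α.HolderConjugate (α / (α - 1)) := by
      exact (Real.holderConjugate_iff_eq_conjExponent h1).2 rfl
    have holder := Real.inner_le_Lp_mul_Lq Finset.univ a b hconj
    have habs : ∀ (f : Fin m → ℝ), (∀ j, 0 ≤ f j) → ∀ (r : ℝ), ∑ j, |f j| ^ r = ∑ j, f j ^ r :=
      fun f hf r => Finset.sum_congr rfl fun j _ => by rw [abs_of_nonneg (hf j)]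
    rw [habs a ha α, habs b hb (α / (α - 1))] at holder
    refine le_trans holder (mul_le_mul_of_nonneg_left ?_
      (Real.rpow_nonneg (Finset.sum_nonneg fun j _ => Real.rpow_nonneg (ha j) α) _))
    refine lp_mono b hb hβ0 ?_
    have hα' : 0 < α / (α - 1) := div_pos hα0 (by linarith)
    have h2 : 1 / (α / (α - 1)) ≤ 1 / β := by
      have := hconj.inv_add_inv_eq_one
      simp only [one_div] at this hab ⊢
      linarith
    exact le_of_one_div_le_one_div hα' h2

section helpers

variable {𝕜 : Type*} [RCLike 𝕜] {X : Type*} [NormedAddCommGroup X] [NormedSpace 𝕜 X]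

lemma bdd_sup (p : ℝ) (hp : 0 < p) (m : ℕ) (x : Fin m → X) :
    BddAbove (Set.range fun φ : {φ : X →L[𝕜] 𝕜 // ‖φ‖ ≤ 1} =>
      (∑ j, ‖φ.1 (x j)‖ ^ p) ^ (1 / p)) := by
  refine ⟨(∑ j, ‖x j‖ ^ p) ^ (1 / p), ?_⟩
  rintro _ ⟨φ, rfl⟩
  refine Real.rpow_le_rpow (Finset.sum_nonneg fun j _ => Real.rpow_nonneg (norm_nonneg _) p)
    (Finset.sum_le_sum fun j _ => Real.rpow_le_rpow (norm_nonneg _) ?_ (le_of_lt hp))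
    (by positivity)
  calc ‖φ.1 (x j)‖ ≤ ‖φ.1‖ * ‖x j‖ := φ.1.le_opNorm _
    _ ≤ 1 * ‖x j‖ := mul_le_mul_of_nonneg_right φ.2 (norm_nonneg _)
    _ = ‖x j‖ := one_mul _

lemma sup_nonneg' (p : ℝ) (hp : 0 < p) (m : ℕ) (x : Fin m → X) :
    0 ≤ ⨆ φ : {φ : X →L[𝕜] 𝕜 // ‖φ‖ ≤ 1}, (∑ j, ‖φ.1 (x j)‖ ^ p) ^ (1 / p) := by
  haveI : Nonempty {φ : X →L[𝕜] 𝕜 // ‖φ‖ ≤ 1} := ⟨⟨0, by simp⟩⟩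
  exact le_ciSup_of_le (bdd_sup p hp m x) (Classical.arbitrary _)
    (Real.rpow_nonneg (Finset.sum_nonneg fun j _ => Real.rpow_nonneg (norm_nonneg _) p) _)

end helpers

theorem stmt18' {𝕜 : Type*} [RCLike 𝕜] {X Y : Type*}
    [NormedAddCommGroup X] [NormedSpace 𝕜 X] [CompleteSpace X]
    [NormedAddCommGroup Y] [NormedSpace 𝕜 Y] [CompleteSpace Y]
    (p₁ p₂ q₁ q₂ : ℝ)
    (hp₁ : 1 ≤ p₁) (hp₁₂ : p₁ ≤ p₂) (hq₁ : 1 ≤ q₁) (hq₁₂ : q₁ ≤ q₂)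
    (hpq₁ : p₁ ≤ q₁) (hpq₂ : p₂ ≤ q₂)
    (hstar : 1 / p₁ - 1 / q₁ ≤ 1 / p₂ - 1 / q₂)
    (u : X →L[𝕜] Y) :
    (∀ C : ℝ, 0 < C →
      (∀ (m : ℕ) (x : Fin m → X),
        (∑ j, ‖u (x j)‖ ^ q₁) ^ (1 / q₁) ≤
          C * ⨆ φ : {φ : X →L[𝕜] 𝕜 // ‖φ‖ ≤ 1},
            (∑ j, ‖φ.1 (x j)‖ ^ p₁) ^ (1 / p₁)) →
      (∀ (m : ℕ) (x : Fin m → X),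
        (∑ j, ‖u (x j)‖ ^ q₂) ^ (1 / q₂) ≤
          C * ⨆ φ : {φ : X →L[𝕜] 𝕜 // ‖φ‖ ≤ 1},
            (∑ j, ‖φ.1 (x j)‖ ^ p₂) ^ (1 / p₂))) := by
  have hp₁0 : (0:ℝ) < p₁ := by linarith
  have hp₂0 : (0:ℝ) < p₂ := by linarith
  have hq₁0 : (0:ℝ) < q₁ := by linarith
  have hq₂0 : (0:ℝ) < q₂ := by linarith
  haveI : Nonempty {φ : X →L[𝕜] 𝕜 // ‖φ‖ ≤ 1} := ⟨⟨0, by simp⟩⟩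
  intro C hC h m x
  by_cases hqeq : q₁ = q₂
  · subst hqeq
    have hpeq : p₁ = p₂ := by
      have h1 : 1 / p₁ ≤ 1 / p₂ := by linarith
      have := le_of_one_div_le_one_div hp₁0 h1
      linarith
    subst hpeq
    exact h m x
  have hq12 : q₁ < q₂ := lt_of_le_of_ne hq₁₂ hqeq
  set invs : ℝ := 1 / q₁ - 1 / q₂ with hinvs
  have hinvs0 : 0 < invs := by
    have : 1 / q₂ < 1 / q₁ := one_div_lt_one_div_of_lt hq₁0 hq12
    rw [hinvs]; linarith
  set t : ℝ := q₂ * invs with ht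
  have ht0 : 0 ≤ t := le_of_lt (mul_pos hq₂0 hinvs0)
  set S : ℝ := ∑ j, ‖u (x j)‖ ^ q₂ with hSdef
  have hS0 : 0 ≤ S :=
    Finset.sum_nonneg fun j _ => Real.rpow_nonneg (norm_nonneg _) q₂
  set A : ℝ := ⨆ φ : {φ : X →L[𝕜] 𝕜 // ‖φ‖ ≤ 1},
      (∑ j, ‖φ.1 (x j)‖ ^ p₂) ^ (1 / p₂) with hAdef
  have hA0 : 0 ≤ A := sup_nonneg' p₂ hp₂0 m x
  set σ : Fin m → ℝ := fun j => ‖u (x j)‖ ^ t with hσdef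
  have hσ0 : ∀ j, 0 ≤ σ j := fun j => Real.rpow_nonneg (norm_nonneg _) t
  set y : Fin m → X := fun j => ((σ j : ℝ) : 𝕜) • x j with hydef
  -- exponents
  set α : ℝ := 1 / (invs * p₁) with hαdef
  set β : ℝ := p₂ / p₁ with hβdef
  have hinvsp : 0 < invs * p₁ := mul_pos hinvs0 hp₁0
  have hinvs_le : invs ≤ 1 / p₁ := by
    have h1 : 1 / q₁ ≤ 1 / p₁ := one_div_le_one_div_of_le hp₁0 hpq₁
    have h2 : 0 < 1 / q₂ := by positivity
    rw [hinvs]; linarith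
  have hip1 : invs * p₁ ≤ 1 := by
    calc invs * p₁ ≤ (1 / p₁) * p₁ := mul_le_mul_of_nonneg_right hinvs_le hp₁0.le
      _ = 1 := one_div_mul_cancel hp₁0.ne'
  have hα1 : 1 ≤ α := by
    rw [hαdef, le_div_iff₀ hinvsp]; linarith
  have hβ1 : 1 ≤ β := (one_le_div hp₁0).mpr hp₁₂
  have h1α : 1 / α = invs * p₁ := by rw [hαdef, one_div_one_div]
  have h1β : 1 / β = p₁ / p₂ := by rw [hβdef, one_div_div]
  have hab : 1 ≤ 1 / α + 1 / β := by
    rw [h1α, h1β]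
    have h1 : 1 / p₁ - 1 / p₂ ≤ invs := by rw [hinvs]; linarith
    have h2 := mul_le_mul_of_nonneg_right h1 hp₁0.le
    have e1 : (1 / p₁ - 1 / p₂) * p₁ = 1 - p₁ / p₂ := by
      field_simp
    linarith [e1 ▸ h2]
  -- norms of the scaled family
  have huy : ∀ j, ‖u (y j)‖ = σ j * ‖u (x j)‖ := by
    intro j
    rw [hydef]
    simp only [map_smul, norm_smul, RCLike.norm_ofReal, abs_of_nonneg (hσ0 j)]
  have hφy : ∀ (φ : X →L[𝕜] 𝕜) (j : Fin m), ‖φ (y j)‖ = σ j * ‖φ (x j)‖ := by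
    intro φ j
    rw [hydef]
    simp only [map_smul, norm_smul, RCLike.norm_ofReal, abs_of_nonneg (hσ0 j)]
  -- exponent identities
  have hexp1 : (t + 1) * q₁ = q₂ := by
    rw [ht, hinvs]; field_simp; ring
  have hBLA : ∀ j, (σ j * ‖u (x j)‖) ^ q₁ = ‖u (x j)‖ ^ q₂ := by
    intro j
    have e1 : σ j * ‖u (x j)‖ = ‖u (x j)‖ ^ (t + 1) := by
      rw [Real.rpow_add' (norm_nonneg _) (by linarith : t + 1 ≠ 0), Real.rpow_one, hσdef]
    rw [e1, ← Real.rpow_mul (norm_nonneg _), hexp1]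
  have hBLB : ∀ j, (σ j ^ p₁) ^ α = ‖u (x j)‖ ^ q₂ := by
    intro j
    rw [← Real.rpow_mul (hσ0 j)]
    simp only [hσdef]
    rw [← Real.rpow_mul (norm_nonneg _)]
    congr 1
    rw [hαdef, ht]
    field_simp
  have hBLC : ∀ (c : ℝ), 0 ≤ c → (c ^ p₁) ^ β = c ^ p₂ := by
    intro c hc
    rw [← Real.rpow_mul hc]
    congr 1
    rw [hβdef]
    field_simp
  -- the per-functional bound
  have hφbound : ∀ φ : {φ : X →L[𝕜] 𝕜 // ‖φ‖ ≤ 1},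
      (∑ j, ‖φ.1 (y j)‖ ^ p₁) ^ (1 / p₁) ≤ S ^ invs * A := by
    intro φ
    have hsum : ∑ j, ‖φ.1 (y j)‖ ^ p₁ = ∑ j, σ j ^ p₁ * ‖φ.1 (x j)‖ ^ p₁ := by
      refine Finset.sum_congr rfl fun j _ => ?_
      rw [hφy φ.1 j, Real.mul_rpow (hσ0 j) (norm_nonneg _)]
    have hGH := gen_holder (fun j => σ j ^ p₁) (fun j => ‖φ.1 (x j)‖ ^ p₁)
      (fun j => Real.rpow_nonneg (hσ0 j) p₁) (fun j => Real.rpow_nonneg (norm_nonneg _) p₁)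
      hα1 hβ1 hab
    have e2 : ∑ j, (σ j ^ p₁) ^ α = S := by
      rw [hSdef]; exact Finset.sum_congr rfl fun j _ => hBLB j
    have e3 : ∑ j, (‖φ.1 (x j)‖ ^ p₁) ^ β = ∑ j, ‖φ.1 (x j)‖ ^ p₂ :=
      Finset.sum_congr rfl fun j _ => hBLC _ (norm_nonneg _)
    rw [e2, e3, h1α, h1β] at hGH
    have hs2nn : 0 ≤ ∑ j, ‖φ.1 (x j)‖ ^ p₂ :=
      Finset.sum_nonneg fun j _ => Real.rpow_nonneg (norm_nonneg _) p₂
    calc (∑ j, ‖φ.1 (y j)‖ ^ p₁) ^ (1 / p₁)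
        = (∑ j, σ j ^ p₁ * ‖φ.1 (x j)‖ ^ p₁) ^ (1 / p₁) := by rw [hsum]
      _ ≤ (S ^ (invs * p₁) * (∑ j, ‖φ.1 (x j)‖ ^ p₂) ^ (p₁ / p₂)) ^ (1 / p₁) := by
          refine Real.rpow_le_rpow ?_ hGH (by positivity)
          exact Finset.sum_nonneg fun j _ =>
            mul_nonneg (Real.rpow_nonneg (hσ0 j) p₁) (Real.rpow_nonneg (norm_nonneg _) p₁)
      _ = S ^ invs * (∑ j, ‖φ.1 (x j)‖ ^ p₂) ^ (1 / p₂) := by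
          rw [Real.mul_rpow (Real.rpow_nonneg hS0 _) (Real.rpow_nonneg hs2nn _),
            ← Real.rpow_mul hS0, ← Real.rpow_mul hs2nn]
          have ee1 : invs * p₁ * (1 / p₁) = invs := by field_simp
          have ee2 : p₁ / p₂ * (1 / p₁) = 1 / p₂ := by
            field_simp
            try ring
          rw [ee1, ee2]
      _ ≤ S ^ invs * A := by
          rw [hAdef]
          exact mul_le_mul_of_nonneg_left (le_ciSup (bdd_sup p₂ hp₂0 m x) φ)
            (Real.rpow_nonneg hS0 _)
  -- apply the hypothesis to the scaled family
  have hL : ∑ j, ‖u (y j)‖ ^ q₁ = S := by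
    rw [hSdef]
    exact Finset.sum_congr rfl fun j _ => by rw [huy j, hBLA j]
  have main := h m y
  rw [hL] at main
  have hsup : (⨆ φ : {φ : X →L[𝕜] 𝕜 // ‖φ‖ ≤ 1},
      (∑ j, ‖φ.1 (y j)‖ ^ p₁) ^ (1 / p₁)) ≤ S ^ invs * A := ciSup_le hφbound
  have chain : S ^ (1 / q₁) ≤ C * (S ^ invs * A) :=
    le_trans main (mul_le_mul_of_nonneg_left hsup hC.le)
  have hsplit : S ^ (1 / q₁) = S ^ invs * S ^ (1 / q₂) := by
    have he : invs + 1 / q₂ = 1 / q₁ := by rw [hinvs]; ring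
    rw [← he, Real.rpow_add' hS0 (by rw [he]; exact one_div_ne_zero hq₁0.ne')]
  rcases eq_or_lt_of_le hS0 with hS | hS
  · rw [← hS, Real.zero_rpow (one_div_ne_zero hq₂0.ne')]
    exact mul_nonneg hC.le hA0
  · have hpos : 0 < S ^ invs := Real.rpow_pos_of_pos hS _
    rw [hsplit] at chain
    have h2 : S ^ invs * S ^ (1 / q₂) ≤ S ^ invs * (C * A) := by
      calc S ^ invs * S ^ (1 / q₂) ≤ C * (S ^ invs * A) := chain
        _ = S ^ invs * (C * A) := by ring
    exact le_of_mul_le_mul_left h2 hpos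

/-- **Inclusion Theorem for absolutely summing operators.** If
`p₁, p₂, q₁, q₂` satisfy condition (★) and `u : X → Y` is a continuous linear operator
between Banach spaces which is absolutely `(q₁,p₁)`-summing, then `u` is absolutely
`(q₂,p₂)`-summing; moreover any constant `C > 0` working for `(q₁,p₁)` also works for
`(q₂,p₂)`. -/
theorem stmt18 {𝕜 : Type*} [RCLike 𝕜] {X Y : Type*}
    [NormedAddCommGroup X] [NormedSpace 𝕜 X] [CompleteSpace X]
    [NormedAddCommGroup Y] [NormedSpace 𝕜 Y] [CompleteSpace Y]
    (p₁ p₂ q₁ q₂ : ℝ)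
    (hp₁ : 1 ≤ p₁) (hp₁₂ : p₁ ≤ p₂) (hq₁ : 1 ≤ q₁) (hq₁₂ : q₁ ≤ q₂)
    (hpq₁ : p₁ ≤ q₁) (hpq₂ : p₂ ≤ q₂)
    (hstar : 1 / p₁ - 1 / q₁ ≤ 1 / p₂ - 1 / q₂)
    (u : X →L[𝕜] Y) :
    (AbsSumming q₁ p₁ u → AbsSumming q₂ p₂ u) ∧
    (∀ C : ℝ, 0 < C →
      (∀ (m : ℕ) (x : Fin m → X),
        (∑ j, ‖u (x j)‖ ^ q₁) ^ (1 / q₁) ≤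
          C * ⨆ φ : {φ : X →L[𝕜] 𝕜 // ‖φ‖ ≤ 1},
            (∑ j, ‖φ.1 (x j)‖ ^ p₁) ^ (1 / p₁)) →
      (∀ (m : ℕ) (x : Fin m → X),
        (∑ j, ‖u (x j)‖ ^ q₂) ^ (1 / q₂) ≤
          C * ⨆ φ : {φ : X →L[𝕜] 𝕜 // ‖φ‖ ≤ 1},
            (∑ j, ‖φ.1 (x j)‖ ^ p₂) ^ (1 / p₂))) := by
  have key := stmt18' p₁ p₂ q₁ q₂ hp₁ hp₁₂ hq₁ hq₁₂ hpq₁ hpq₂ hstar u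
  refine ⟨?_, key⟩
  intro hA
  obtain ⟨C, hC, hh⟩ := hA
  exact ⟨C, hC, key C hC hh⟩
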